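/- arXiv:1907.12589 — 2 statements merged into one kernel-verified Lean document; each statement's English description precedes it below -/
import Mathlib

section
/- For all z > 0 and b > 0, the FAB p-value is strictly smaller than the UMPU p-value: p(z,b) < p(z,0). Similarly, for all z < 0 and b < 0, p(z,b) < p(z,0). -/
open MeasureTheory ProbabilityTheory

/-- Φ, the standard normal cumulative distribution function. -/
noncomputable def Phi : ℝ → ℝ := fun x => ProbabilityTheory.cdf (gaussianReal 0 1) x

/-- The FAB p-value function. -/
noncomputable def fabP (z b : ℝ) : ℝ := 1 - |Phi (z + b) - Phi (-z)|

lemma Phi_strictMono : StrictMono Phi := by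
  intro x y hxy
  have hmono : Phi x ≤ Phi y := ProbabilityTheory.monotone_cdf _ hxy.le
  rcases hmono.lt_or_eq with h | h
  · exact h
  exfalso
  have hx : ENNReal.ofReal (Phi x) = gaussianReal 0 1 (Set.Iic x) :=
    ProbabilityTheory.ofReal_cdf _ x
  have hy : ENNReal.ofReal (Phi y) = gaussianReal 0 1 (Set.Iic y) :=
    ProbabilityTheory.ofReal_cdf _ y
  have habs : (volume : Measure ℝ) ≪ gaussianReal 0 1 :=
    gaussianReal_absolutelyContinuous' 0 one_ne_zero
  have hioc : gaussianReal 0 1 (Set.Ioc x y) = 0 := by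
    have hsub : gaussianReal 0 1 (Set.Iic y) = gaussianReal 0 1 (Set.Iic x) := by
      rw [← hx, ← hy, h]
    have := measure_diff (μ := gaussianReal 0 1) (Set.Iic_subset_Iic.mpr hxy.le)
      measurableSet_Iic.nullMeasurableSet (measure_ne_top _ _)
    rw [Set.Iic_sdiff_Iic] at this
    rw [this, hsub, tsub_self]
  have : (volume : Measure ℝ) (Set.Ioc x y) = 0 := habs hioc
  rw [Real.volume_Ioc] at this
  simp [ENNReal.ofReal_eq_zero, sub_nonpos, not_lt.mpr hxy.le] at this
  linarith

theorem stmt_7 :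
    (∀ z b : ℝ, 0 < z → 0 < b → fabP z b < fabP z 0) ∧
      (∀ z b : ℝ, z < 0 → b < 0 → fabP z b < fabP z 0) := by
  constructor
  · intro z b hz hb
    unfold fabP
    rw [add_zero]
    have h1 : Phi (-z) < Phi z := Phi_strictMono (by linarith)
    have h2 : Phi z < Phi (z + b) := Phi_strictMono (by linarith)
    rw [abs_of_pos (by simp; linarith), abs_of_pos (by linarith)]
    linarith
  · intro z b hz hb
    unfold fabP
    rw [add_zero]
    have h1 : Phi z < Phi (-z) := Phi_strictMono (by linarith)
    have h2 : Phi (z + b) < Phi z := Phi_strictMono (by linarith)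
    rw [abs_of_neg (by simp; linarith), abs_of_neg (by linarith)]
    linarith
end

section
/- Fix b > 0. Then the ratio of the FAB p-value to the UMPU p-value converges to one half as z tends to infinity: lim_{z→∞} p(z,b)/p(z,0) = 1/2. -/
open MeasureTheory ProbabilityTheory Filter

open Set Real

/-- standard normal pdf -/
noncomputable def stdG : ℝ → ℝ := gaussianPDFReal 0 1

lemma stdG_eq (t : ℝ) : stdG t = (Real.sqrt (2 * π))⁻¹ * Real.exp (-t ^ 2 / 2) := by
  simp [stdG, gaussianPDFReal]

lemma stdG_nonneg (t : ℝ) : 0 ≤ stdG t := gaussianPDFReal_nonneg 0 1 t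

lemma stdG_pos (t : ℝ) : 0 < stdG t := gaussianPDFReal_pos 0 1 t one_ne_zero

lemma stdG_integrable : Integrable stdG := integrable_gaussianPDFReal 0 1

lemma stdG_neg (t : ℝ) : stdG (-t) = stdG t := by
  rw [stdG_eq, stdG_eq]; norm_num

lemma stdG_anti {s t : ℝ} (hs : 0 ≤ s) (hst : s ≤ t) : stdG t ≤ stdG s := by
  rw [stdG_eq, stdG_eq]
  apply mul_le_mul_of_nonneg_left _ (by positivity)
  apply Real.exp_le_exp.2
  nlinarith

/-- tail of the standard normal -/
noncomputable def stdT (x : ℝ) : ℝ := ∫ t in Set.Ioi x, stdG t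

lemma Phi_eq (x : ℝ) : Phi x = ∫ t in Set.Iic x, stdG t := by
  rw [Phi, cdf_eq_real, measureReal_def, gaussianReal_apply_eq_integral 0 one_ne_zero,
    ENNReal.toReal_ofReal]
  · rfl
  · exact setIntegral_nonneg measurableSet_Iic (fun t _ => stdG_nonneg t)

lemma Phi_add_stdT (x : ℝ) : Phi x + stdT x = 1 := by
  rw [Phi_eq, stdT, intervalIntegral.integral_Iic_add_Ioi (stdG_integrable.integrableOn)
    (stdG_integrable.integrableOn)]
  exact integral_gaussianPDFReal_eq_one 0 one_ne_zero

lemma Phi_neg (x : ℝ) : Phi (-x) = stdT x := by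
  rw [Phi_eq, stdT]
  calc (∫ t in Set.Iic (-x), stdG t) = ∫ t in Set.Iic (-x), stdG (-t) :=
        setIntegral_congr_fun measurableSet_Iic (fun t _ => (stdG_neg t).symm)
    _ = ∫ t in Set.Ioi (-(-x)), stdG t := integral_comp_neg_Iic (-x) stdG
    _ = ∫ t in Set.Ioi x, stdG t := by rw [neg_neg]

lemma Phi_mono : Monotone Phi := fun x y hxy =>
  (ProbabilityTheory.cdf (gaussianReal 0 1)).mono hxy

/-- the integral of t * stdG t over (x, ∞) is stdG x, for x > 0 -/
lemma integral_mul_stdG (x : ℝ) (hx : 0 < x) :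
    (IntegrableOn (fun t => t * stdG t) (Set.Ioi x)) ∧
      ∫ t in Set.Ioi x, t * stdG t = stdG x := by
  have hderiv : ∀ t ∈ Set.Ici x, HasDerivAt (fun t => -stdG t) (t * stdG t) t := by
    intro t _
    have h : HasDerivAt (fun t : ℝ => -t ^ 2 / 2) (-t) t := by
      have := ((hasDerivAt_pow 2 t).neg).div_const 2
      simpa using this.congr_deriv (by ring)
    have h3 := ((h.exp).const_mul (Real.sqrt (2 * π))⁻¹).neg
    have heq : (fun t : ℝ => -stdG t) = fun y => -((Real.sqrt (2 * π))⁻¹ *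
        Real.exp (-y ^ 2 / 2)) := by
      funext y; rw [stdG_eq]
    rw [heq]
    refine h3.congr_deriv ?_
    rw [stdG_eq]; ring
  have hpos : ∀ t ∈ Set.Ioi x, 0 ≤ t * stdG t := fun t ht =>
    mul_nonneg (le_of_lt (lt_trans hx ht)) (stdG_nonneg t)
  have htend : Tendsto (fun t => -stdG t) atTop (nhds 0) := by
    have h1 : Tendsto (fun t : ℝ => -t ^ 2 / 2) atTop atBot := by
      apply Filter.Tendsto.atBot_div_const two_pos
      simpa using (tendsto_pow_atTop (two_ne_zero)).neg
    have h2 := (Real.tendsto_exp_atBot).comp h1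
    have h3 := h2.const_mul (Real.sqrt (2 * π))⁻¹
    rw [mul_zero] at h3
    have h4 : Tendsto stdG atTop (nhds 0) :=
      h3.congr (fun t => (stdG_eq t).symm)
    simpa using h4.neg
  exact ⟨integrableOn_Ioi_deriv_of_nonneg' hderiv hpos htend,
    by simpa using integral_Ioi_of_hasDerivAt_of_nonneg' hderiv hpos htend⟩

lemma stdT_le (x : ℝ) (hx : 0 < x) : stdT x ≤ stdG x / x := by
  obtain ⟨hint, hval⟩ := integral_mul_stdG x hx
  have h1 : stdT x ≤ ∫ t in Set.Ioi x, x⁻¹ * (t * stdG t) := by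
    apply setIntegral_mono_on (stdG_integrable.integrableOn) (hint.const_mul x⁻¹)
      measurableSet_Ioi
    intro t ht
    have htx : x ≤ t := le_of_lt ht
    have h2 : 1 ≤ x⁻¹ * t := by
      rw [← div_eq_inv_mul]; exact (one_le_div hx).2 htx
    nlinarith [stdG_nonneg t]
  calc stdT x ≤ ∫ t in Set.Ioi x, x⁻¹ * (t * stdG t) := h1
    _ = x⁻¹ * ∫ t in Set.Ioi x, t * stdG t := integral_const_mul _ _
    _ = x⁻¹ * stdG x := by rw [hval]
    _ = stdG x / x := (div_eq_inv_mul _ _).symm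

lemma stdT_ge (x c : ℝ) (hx : 0 ≤ x) (hc : 0 < c) : c * stdG (x + c) ≤ stdT x := by
  have h1 : (∫ _t in Set.Ioc x (x + c), stdG (x + c)) = c * stdG (x + c) := by
    rw [setIntegral_const, Real.volume_real_Ioc_of_le (by linarith), smul_eq_mul]
    ring_nf
  have h2 : (∫ _t in Set.Ioc x (x + c), stdG (x + c)) ≤
      ∫ t in Set.Ioc x (x + c), stdG t := by
    apply setIntegral_mono_on (integrableOn_const (by
      rw [Real.volume_Ioc]; exact ENNReal.ofReal_ne_top))
      (stdG_integrable.integrableOn) measurableSet_Ioc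
    intro t ht
    exact stdG_anti (by linarith [ht.1]) ht.2
  have h3 : (∫ t in Set.Ioc x (x + c), stdG t) ≤ ∫ t in Set.Ioi x, stdG t := by
    apply setIntegral_mono_set (stdG_integrable.integrableOn)
      (Filter.Eventually.of_forall (fun t => stdG_nonneg t))
    exact (Set.Ioc_subset_Ioi_self).eventuallyLE
  calc c * stdG (x + c) = _ := h1.symm
    _ ≤ _ := h2
    _ ≤ stdT x := h3

lemma stdT_pos (x : ℝ) (hx : 0 ≤ x) : 0 < stdT x :=
  lt_of_lt_of_le (mul_pos one_pos (stdG_pos (x + 1))) (stdT_ge x 1 hx one_pos)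

theorem stmt_8 (b : ℝ) (hb : 0 < b) :
    Tendsto (fun z : ℝ => fabP z b / fabP z 0) atTop (nhds (1 / 2)) := by
  have key : ∀ z : ℝ, 0 < z →
      fabP z b / fabP z 0 = (stdT (z + b) / stdT z) / 2 + 1 / 2 := by
    intro z hz
    have hTz : 0 < stdT z := stdT_pos z hz.le
    have hPzb : Phi (z + b) = 1 - stdT (z + b) := by
      have := Phi_add_stdT (z + b); linarith
    have hPz : Phi z = 1 - stdT z := by
      have := Phi_add_stdT z; linarith
    have hPnz : Phi (-z) = stdT z := Phi_neg z
    have hmono1 : Phi (-z) ≤ Phi (z + b) := Phi_mono (by linarith)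
    have hmono2 : Phi (-z) ≤ Phi (z + 0) := Phi_mono (by linarith)
    have hb' : fabP z b = stdT (z + b) + stdT z := by
      rw [fabP, abs_of_nonneg (by linarith), hPzb, hPnz]; ring
    have h0' : fabP z 0 = 2 * stdT z := by
      rw [fabP, abs_of_nonneg (by linarith), add_zero, hPz, hPnz]; ring
    rw [hb', h0']
    field_simp
  have hbound : Tendsto (fun z : ℝ => stdT (z + b) / stdT z) atTop (nhds 0) := by
    apply squeeze_zero' (g := fun z : ℝ => 1 / (b * (z + b)))
    · filter_upwards [eventually_gt_atTop (0:ℝ)] with z hz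
      exact div_nonneg (stdT_pos (z + b) (by linarith)).le (stdT_pos z hz.le).le
    · filter_upwards [eventually_gt_atTop (0:ℝ)] with z hz
      have hzb : 0 < z + b := by linarith
      have hG : 0 < stdG (z + b) := stdG_pos (z + b)
      have h1 : stdT (z + b) ≤ stdG (z + b) / (z + b) := stdT_le (z + b) hzb
      have h2 : b * stdG (z + b) ≤ stdT z := stdT_ge z b hz.le hb
      have h3 : stdT (z + b) / stdT z ≤ (stdG (z + b) / (z + b)) / (b * stdG (z + b)) :=
        div_le_div₀ (by positivity) h1 (by positivity) h2
      have h4 : (stdG (z + b) / (z + b)) / (b * stdG (z + b)) = 1 / (b * (z + b)) := by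
        field_simp
      linarith [h3, h4.symm.le]
    · have h5 : Tendsto (fun z : ℝ => b * (z + b)) atTop atTop :=
        (tendsto_atTop_add_const_right _ b tendsto_id).const_mul_atTop hb
      exact h5.inv_tendsto_atTop.congr (fun z => (one_div _).symm)
  have hfinal : Tendsto (fun z : ℝ => (stdT (z + b) / stdT z) / 2 + 1 / 2) atTop
      (nhds (1 / 2)) := by
    have := (hbound.div_const 2).add_const (1 / 2)
    simpa using this
  apply hfinal.congr'
  filter_upwards [eventually_gt_atTop (0:ℝ)] with z hz
  exact (key z hz).symm
end
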